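/- Let D be a dense countably infinite mesh in I^n with an enumeration (d_i)_{i∈ℕ} of its elements, and fix an integer k with 1 ≤ k ≤ n. Let A, B : D → I be functions with A ≤ B and L_k^{(A,B)}(DU) ≥ 0 for all DU ∈ R_k(D), and assume A(v) = B(v) for all vertices v of the unit cube I^n. Define the sequence of functions A^{(i)} : D → I by A^{(0)} = A and, for i ≥ 1, A^{(i)}(d) = A^{(i−1)}(d) for d ≠ d_i and A^{(i)}(d_i) = A^{(i−1)}(d_i) + γ_{k,D}^{(A^{(i−1)},B)}(d_i). Let C : D → I be the pointwise limit of (A^{(i)})_{i∈ℕ} (which exists since at each point the sequence is increasing and bounded). Then C is k-increasing on D, i.e., L_k^{(C,C)}(DU) ≥ 0 for all DU ∈ R_k(D). -/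

import Mathlib

open scoped Classical BigOperators

namespace KIncr

/-- Points of the ambient space `ℝ^n`. -/
abbrev Pt (n : ℕ) := Fin n → ℝ

/-- Membership in the unit cube `I^n = [0,1]^n`. -/
def inCube {n : ℕ} (x : Pt n) : Prop := ∀ i, x i ∈ Set.Icc (0:ℝ) 1

/-- The unit cube as a set. -/
def cubeSet (n : ℕ) : Set (Pt n) := {x | inCube x}

/-- Vertices of the unit cube `I^n`. -/
def isCubeVertex {n : ℕ} (x : Pt n) : Prop := ∀ i, x i = 0 ∨ x i = 1

/-- A (formal) box, given by its lower-left and upper-right corners. -/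
structure Box (n : ℕ) where
  lo : Pt n
  hi : Pt n

/-- `R` is a `k`-box in `I^n`: exactly `k` coordinates are nondegenerate. -/
def Box.IsKBox {n : ℕ} (k : ℕ) (R : Box n) : Prop :=
  inCube R.lo ∧ inCube R.hi ∧ (∀ i, R.lo i ≤ R.hi i) ∧
    (Finset.univ.filter (fun i => R.lo i < R.hi i)).card = k

/-- `v` is a vertex of the box `R`. -/
def Box.IsVertex {n : ℕ} (R : Box n) (v : Pt n) : Prop :=
  ∀ i, v i = R.lo i ∨ v i = R.hi i

/-- The (finite) set of vertices of a box. -/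
noncomputable def Box.vertices {n : ℕ} (R : Box n) : Finset (Pt n) :=
  Finset.image (fun ε : Fin n → Bool => fun i => if ε i then R.hi i else R.lo i)
    Finset.univ

/-- The sign `(-1)^(m-(n-k))` of a vertex `v` of a `k`-box, where
`m = #{i : v i = lo i}`;  since `m ≥ n - k`, this equals `(-1)^(m+(n-k))`. -/
noncomputable def Box.sign {n : ℕ} (k : ℕ) (R : Box n) (v : Pt n) : ℤ :=
  (-1) ^ ((Finset.univ.filter (fun i => v i = R.lo i)).card + (n - k))

/-- The multiplicity `m_R(u)` of a point `u` with respect to a `k`-box `R`. -/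
noncomputable def Box.mult {n : ℕ} (k : ℕ) (R : Box n) (u : Pt n) : ℤ :=
  if R.IsVertex u then R.sign k u else 0

/-- `V_{A,k}(R) = ∑_{v ∈ ver R} sign_R(v) · A(v)`. -/
noncomputable def Vvol {n : ℕ} (k : ℕ) (A : Pt n → ℝ) (R : Box n) : ℝ :=
  ∑ v ∈ R.vertices, (R.sign k v : ℝ) * A v

/-- A function is `k`-increasing on `D` if `V_{A,k}(R) ≥ 0` for every `k`-box
with all vertices in `D`. -/
def KIncreasingOn {n : ℕ} (k : ℕ) (D : Set (Pt n)) (A : Pt n → ℝ) : Prop :=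
  ∀ R : Box n, R.IsKBox k → (∀ v ∈ R.vertices, v ∈ D) → 0 ≤ Vvol k A R

/-- The multiplicity `m_DU(u)` of a point with respect to a formal (multiset)
disjoint union of `k`-boxes. -/
noncomputable def multDU {n : ℕ} (k : ℕ) (DU : Multiset (Box n)) (u : Pt n) : ℤ :=
  (DU.map (fun R => R.mult k u)).sum

/-- `DU ∈ R_k(D)`: every box of the multiset `DU` is a `k`-box with all its
vertices in `D`. -/
def memRk {n : ℕ} (k : ℕ) (D : Set (Pt n)) (DU : Multiset (Box n)) : Prop :=
  ∀ R ∈ DU, R.IsKBox k ∧ ∀ v ∈ R.vertices, v ∈ D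

/-- `L_k^{(A,B)}(DU) = ∑_{m_DU(u)>0} m_DU(u)·B(u) + ∑_{m_DU(u)<0} m_DU(u)·A(u)`. -/
noncomputable def Lk {n : ℕ} (k : ℕ) (A B : Pt n → ℝ) (DU : Multiset (Box n)) : ℝ :=
  ∑ u ∈ DU.toFinset.biUnion Box.vertices,
    (if 0 < multDU k DU u then (multDU k DU u : ℝ) * B u
     else if multDU k DU u < 0 then (multDU k DU u : ℝ) * A u else 0)

/-- `P⁻_{k,D}^{(A,B)}(x)`, with the Mathlib convention `sInf ∅ = 0`. -/
noncomputable def Pneg {n : ℕ} (k : ℕ) (D : Set (Pt n)) (A B : Pt n → ℝ) (x : Pt n) : ℝ :=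
  sInf {r : ℝ | ∃ DU : Multiset (Box n), memRk k D DU ∧ multDU k DU x < 0 ∧
    r = Lk k A B DU / |(multDU k DU x : ℝ)|}

/-- `P⁺_{k,D}^{(A,B)}(x)`, with the Mathlib convention `sInf ∅ = 0`. -/
noncomputable def Ppos {n : ℕ} (k : ℕ) (D : Set (Pt n)) (A B : Pt n → ℝ) (x : Pt n) : ℝ :=
  sInf {r : ℝ | ∃ DU : Multiset (Box n), memRk k D DU ∧ 0 < multDU k DU x ∧
    r = Lk k A B DU / |(multDU k DU x : ℝ)|}

/-- `γ_{k,D}^{(A,B)}(x) = min {P⁻_{k,D}^{(A,B)}(x), B(x) - A(x)}`. -/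
noncomputable def gammaK {n : ℕ} (k : ℕ) (D : Set (Pt n)) (A B : Pt n → ℝ) (x : Pt n) : ℝ :=
  min (Pneg k D A B x) (B x - A x)

/-- `δ_{k,D}^{(A,B)}(x) = min {P⁺_{k,D}^{(A,B)}(x), B(x) - A(x)}`. -/
noncomputable def deltaK {n : ℕ} (k : ℕ) (D : Set (Pt n)) (A B : Pt n → ℝ) (x : Pt n) : ℝ :=
  min (Ppos k D A B x) (B x - A x)

/-- A dense countably infinite mesh `D = ∏ δᵢ` in `I^n`. -/
def IsMesh {n : ℕ} (D : Set (Pt n)) : Prop :=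
  ∃ δ : Fin n → Set ℝ,
    (∀ i, δ i ⊆ Set.Icc (0:ℝ) 1 ∧ (δ i).Countable ∧ (δ i).Infinite ∧
      Set.Icc (0:ℝ) 1 ⊆ closure (δ i) ∧ (0:ℝ) ∈ δ i ∧ (1:ℝ) ∈ δ i) ∧
    D = {x : Pt n | ∀ i, x i ∈ δ i}

/-- `A` is grounded: it vanishes whenever some coordinate is `0`. -/
def Grounded {n : ℕ} (A : Pt n → ℝ) : Prop :=
  ∀ x : Pt n, inCube x → (∃ i, x i = 0) → A x = 0

/-- `A` is 1-increasing (increasing in each variable). -/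
def OneIncreasing {n : ℕ} (A : Pt n → ℝ) : Prop :=
  ∀ x y : Pt n, inCube x → inCube y → (∀ i, x i ≤ y i) → A x ≤ A y

/-- `A` has uniform marginals. -/
def UniformMarginals {n : ℕ} (A : Pt n → ℝ) : Prop :=
  ∀ i : Fin n, ∀ t ∈ Set.Icc (0:ℝ) 1, A (Function.update (fun _ => (1:ℝ)) i t) = t

/-- `A` is a standardized function. -/
def Standardized {n : ℕ} (A : Pt n → ℝ) : Prop :=
  Grounded A ∧ OneIncreasing A ∧ A (fun _ => (1:ℝ)) = 1

/-- `A` is a semicopula. -/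
def Semicopula {n : ℕ} (A : Pt n → ℝ) : Prop :=
  Grounded A ∧ OneIncreasing A ∧ UniformMarginals A

/-- `A` maps the unit cube into `I = [0,1]`. -/
def MapsToI {n : ℕ} (A : Pt n → ℝ) : Prop :=
  ∀ x : Pt n, inCube x → A x ∈ Set.Icc (0:ℝ) 1

/-- Condition S: all discontinuities of all sections of `A` lie in the
countable set `S`. -/
def CondS {n : ℕ} (A : Pt n → ℝ) (S : Set ℝ) : Prop :=
  ∀ u : Pt n, inCube u → ∀ i : Fin n, ∀ t ∈ Set.Icc (0:ℝ) 1, t ∉ S →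
    ContinuousWithinAt (fun s => A (Function.update u i s)) (Set.Icc (0:ℝ) 1) t

/-- A quasi-copula: a semicopula that is 1-Lipschitz w.r.t. the ℓ¹-norm. -/
def QuasiCopula {n : ℕ} (A : Pt n → ℝ) : Prop :=
  Semicopula A ∧ ∀ x y : Pt n, inCube x → inCube y → |A x - A y| ≤ ∑ i, |x i - y i|


theorem mem_vertices_iff {n : ℕ} (R : Box n) (v : Pt n) :
    v ∈ R.vertices ↔ R.IsVertex v := by
  constructor
  · rintro hv i
    simp only [Box.vertices, Finset.mem_image] at hv
    obtain ⟨ε, -, rfl⟩ := hv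
    by_cases h : ε i <;> simp [h]
  · intro h
    simp only [Box.vertices, Finset.mem_image]
    refine ⟨fun i => decide (v i = R.hi i), Finset.mem_univ _, ?_⟩
    funext i
    rcases h i with h1 | h2
    · by_cases h2 : v i = R.hi i
      · simp [h2]
      · simp only [h2, cond_false, decide_eq_true_eq, if_neg h2, h1]
        split <;> simp_all
    · simp [h2]

theorem mult_ne_zero_mem {n : ℕ} {k : ℕ} {R : Box n} {u : Pt n}
    (h : R.mult k u ≠ 0) : u ∈ R.vertices := by
  rw [mem_vertices_iff]
  by_contra hc
  simp [Box.mult, hc] at h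

/-- The support of a multiset of boxes. -/
noncomputable def TSupp {n : ℕ} (DU : Multiset (Box n)) : Finset (Pt n) :=
  DU.toFinset.biUnion Box.vertices

theorem multDU_ne_zero_mem {n : ℕ} {k : ℕ} {DU : Multiset (Box n)} {u : Pt n}
    (h : multDU k DU u ≠ 0) : u ∈ TSupp DU := by
  by_contra hc
  apply h
  rw [multDU]
  apply Multiset.sum_eq_zero
  intro x hx
  simp only [Multiset.mem_map] at hx
  obtain ⟨R, hR, rfl⟩ := hx
  by_contra hm
  exact hc (Finset.mem_biUnion.2 ⟨R, Multiset.mem_toFinset.2 hR, mult_ne_zero_mem hm⟩)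

theorem TSupp_mem_D {n k : ℕ} {D : Set (Pt n)} {DU : Multiset (Box n)}
    (h : memRk k D DU) {u : Pt n} (hu : u ∈ TSupp DU) : u ∈ D := by
  obtain ⟨R, hR, hv⟩ := Finset.mem_biUnion.1 hu
  exact (h R (Multiset.mem_toFinset.1 hR)).2 u hv

theorem multDU_add {n k : ℕ} (DU₁ DU₂ : Multiset (Box n)) (u : Pt n) :
    multDU k (DU₁ + DU₂) u = multDU k DU₁ u + multDU k DU₂ u := by
  simp [multDU]

theorem multDU_nsmul {n k : ℕ} (c : ℕ) (DU : Multiset (Box n)) (u : Pt n) :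
    multDU k (c • DU) u = c * multDU k DU u := by
  induction c with
  | zero => simp [multDU]
  | succ m ih => rw [succ_nsmul, multDU_add, ih]; push_cast; ring

theorem memRk_add {n k : ℕ} {D : Set (Pt n)} {DU₁ DU₂ : Multiset (Box n)}
    (h₁ : memRk k D DU₁) (h₂ : memRk k D DU₂) : memRk k D (DU₁ + DU₂) := by
  intro R hR
  rcases Multiset.mem_add.1 hR with h | h
  · exact h₁ R h
  · exact h₂ R h

theorem memRk_nsmul {n k : ℕ} {D : Set (Pt n)} {DU : Multiset (Box n)} (c : ℕ)
    (h : memRk k D DU) : memRk k D (c • DU) := by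
  induction c with
  | zero => intro R hR; simp at hR
  | succ m ih => rw [succ_nsmul]; exact memRk_add ih h

theorem TSupp_add_subset {n : ℕ} (DU₁ DU₂ : Multiset (Box n)) :
    TSupp (DU₁ + DU₂) ⊆ TSupp DU₁ ∪ TSupp DU₂ := by
  intro u hu
  obtain ⟨R, hR, hv⟩ := Finset.mem_biUnion.1 hu
  rw [Multiset.mem_toFinset, Multiset.mem_add] at hR
  rcases hR with h | h
  · exact Finset.mem_union_left _ (Finset.mem_biUnion.2 ⟨R, Multiset.mem_toFinset.2 h, hv⟩)
  · exact Finset.mem_union_right _ (Finset.mem_biUnion.2 ⟨R, Multiset.mem_toFinset.2 h, hv⟩)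

theorem TSupp_nsmul_subset {n : ℕ} (c : ℕ) (DU : Multiset (Box n)) :
    TSupp (c • DU) ⊆ TSupp DU := by
  intro u hu
  obtain ⟨R, hR, hv⟩ := Finset.mem_biUnion.1 hu
  rw [Multiset.mem_toFinset] at hR
  have : R ∈ DU := by
    rcases Nat.eq_zero_or_pos c with rfl | hc
    · simp at hR
    · exact (Multiset.mem_nsmul.1 hR).2
  exact Finset.mem_biUnion.2 ⟨R, Multiset.mem_toFinset.2 this, hv⟩

/-- `Lk` as a sum over any finset containing the support, in min/max form. -/
theorem Lk_eq_sum {n k : ℕ} (A B : Pt n → ℝ) (DU : Multiset (Box n))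
    (S : Finset (Pt n)) (hS : TSupp DU ⊆ S) :
    Lk k A B DU = ∑ u ∈ S,
      (((min (multDU k DU u) 0 : ℤ) : ℝ) * A u + ((max (multDU k DU u) 0 : ℤ) : ℝ) * B u) := by
  rw [Lk]
  rw [Finset.sum_subset (show DU.toFinset.biUnion Box.vertices ⊆ S from hS)]
  · apply Finset.sum_congr rfl
    intro u _
    rcases lt_trichotomy (multDU k DU u) 0 with h | h | h
    · rw [if_neg (by omega), if_pos h, min_eq_left h.le, max_eq_right h.le]
      push_cast; ring
    · simp [h]
    · rw [if_pos h, min_eq_right h.le, max_eq_left h.le]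
      push_cast; ring
  · intro u _ hu
    have : multDU k DU u = 0 := by
      by_contra hc; exact hu (multDU_ne_zero_mem hc)
    simp [this]

theorem Pneg_nonneg {n k : ℕ} {D : Set (Pt n)} {A B : Pt n → ℝ}
    (hL : ∀ DU : Multiset (Box n), memRk k D DU → 0 ≤ Lk k A B DU) (x : Pt n) :
    0 ≤ Pneg k D A B x := by
  apply Real.sInf_nonneg
  rintro r ⟨DU, hDU, hm, rfl⟩
  exact div_nonneg (hL DU hDU) (abs_nonneg _)

theorem Lk_update {n k : ℕ} {A A' B : Pt n → ℝ} {x : Pt n} {g : ℝ}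
    (hA' : ∀ u, A' u = if u = x then A u + g else A u) (DU : Multiset (Box n)) :
    Lk k A' B DU = Lk k A B DU + ((min (multDU k DU x) 0 : ℤ) : ℝ) * g := by
  set S := insert x (TSupp DU) with hSdef
  have hxS : x ∈ S := Finset.mem_insert_self _ _
  have hsub : TSupp DU ⊆ S := Finset.subset_insert _ _
  rw [Lk_eq_sum A B DU S hsub, Lk_eq_sum A' B DU S hsub]
  rw [← Finset.add_sum_erase S _ hxS, ← Finset.add_sum_erase S _ hxS]
  have hcong : ∀ u ∈ S.erase x,
      (((min (multDU k DU u) 0 : ℤ) : ℝ) * A' u + ((max (multDU k DU u) 0 : ℤ) : ℝ) * B u)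
      = (((min (multDU k DU u) 0 : ℤ) : ℝ) * A u + ((max (multDU k DU u) 0 : ℤ) : ℝ) * B u) := by
    intro u hu
    have : u ≠ x := Finset.ne_of_mem_erase hu
    rw [hA' u, if_neg this]
  rw [Finset.sum_congr rfl hcong, hA' x, if_pos rfl]
  ring

theorem Lk_step_nonneg {n k : ℕ} {D : Set (Pt n)} {A A' B : Pt n → ℝ} {x : Pt n}
    (hL : ∀ DU : Multiset (Box n), memRk k D DU → 0 ≤ Lk k A B DU)
    (hA' : ∀ u, A' u = if u = x then A u + gammaK k D A B x else A u) :
    ∀ DU : Multiset (Box n), memRk k D DU → 0 ≤ Lk k A' B DU := by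
  intro DU hDU
  rw [Lk_update hA' DU]
  rcases le_or_gt 0 (multDU k DU x) with h | h
  · rw [min_eq_right h]
    simpa using hL DU hDU
  · rw [min_eq_left h.le]
    have habs : (0:ℝ) < |(multDU k DU x : ℝ)| := by
      rw [abs_pos]; exact_mod_cast h.ne
    have hmem : Lk k A B DU / |(multDU k DU x : ℝ)| ∈
        {r : ℝ | ∃ DU' : Multiset (Box n), memRk k D DU' ∧ multDU k DU' x < 0 ∧
          r = Lk k A B DU' / |(multDU k DU' x : ℝ)|} := ⟨DU, hDU, h, rfl⟩
    have hbdd : BddBelow {r : ℝ | ∃ DU' : Multiset (Box n), memRk k D DU' ∧ multDU k DU' x < 0 ∧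
        r = Lk k A B DU' / |(multDU k DU' x : ℝ)|} := by
      refine ⟨0, ?_⟩
      rintro r ⟨DU', hDU', hm', rfl⟩
      exact div_nonneg (hL DU' hDU') (abs_nonneg _)
    have hP : Pneg k D A B x ≤ Lk k A B DU / |(multDU k DU x : ℝ)| := csInf_le hbdd hmem
    have hg : gammaK k D A B x ≤ Lk k A B DU / |(multDU k DU x : ℝ)| :=
      le_trans (min_le_left _ _) hP
    have habsval : |(multDU k DU x : ℝ)| = -((multDU k DU x : ℤ) : ℝ) := by
      rw [abs_of_neg]; exact_mod_cast h
    have hmul : (multDU k DU x : ℝ) * gammaK k D A B x ≥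
        (multDU k DU x : ℝ) * (Lk k A B DU / |(multDU k DU x : ℝ)|) := by
      apply mul_le_mul_of_nonpos_left hg
      exact_mod_cast h.le
    have : (multDU k DU x : ℝ) * (Lk k A B DU / |(multDU k DU x : ℝ)|) = -Lk k A B DU := by
      have hm0 : ((multDU k DU x : ℤ) : ℝ) ≠ 0 := by exact_mod_cast h.ne
      rw [habsval]; field_simp
    linarith [hmul, this]

theorem Lk_tendsto {n k : ℕ} {D : Set (Pt n)} {B C : Pt n → ℝ} {As : ℕ → Pt n → ℝ}
    (hC : ∀ u ∈ D, Filter.Tendsto (fun i => As i u) Filter.atTop (nhds (C u)))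
    (DU : Multiset (Box n)) (hDU : memRk k D DU) :
    Filter.Tendsto (fun i => Lk k (As i) B DU) Filter.atTop (nhds (Lk k C B DU)) := by
  have hrw : ∀ i, Lk k (As i) B DU = ∑ u ∈ TSupp DU,
      (((min (multDU k DU u) 0 : ℤ) : ℝ) * As i u + ((max (multDU k DU u) 0 : ℤ) : ℝ) * B u) :=
    fun i => Lk_eq_sum _ _ _ _ (le_refl _)
  rw [Lk_eq_sum C B DU (TSupp DU) (le_refl _)]
  simp only [hrw]
  apply tendsto_finset_sum
  intro u hu
  exact (Filter.Tendsto.const_mul _ (hC u (TSupp_mem_D hDU hu))).add tendsto_const_nhds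

theorem Lk_limit_nonneg {n k : ℕ} {D : Set (Pt n)} {B C : Pt n → ℝ} {As : ℕ → Pt n → ℝ}
    (hC : ∀ u ∈ D, Filter.Tendsto (fun i => As i u) Filter.atTop (nhds (C u)))
    (hLi : ∀ i, ∀ DU : Multiset (Box n), memRk k D DU → 0 ≤ Lk k (As i) B DU) :
    ∀ DU : Multiset (Box n), memRk k D DU → 0 ≤ Lk k C B DU := by
  intro DU hDU
  exact ge_of_tendsto' (Lk_tendsto hC DU hDU) (fun i => hLi i DU hDU)

theorem dense_exists_between {δ : Set ℝ} (hdens : Set.Icc (0:ℝ) 1 ⊆ closure δ)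
    {a b : ℝ} (h0 : 0 ≤ a) (hab : a < b) (hb1 : b ≤ 1) : ∃ y ∈ δ, a < y ∧ y < b := by
  have ht : (a + b) / 2 ∈ Set.Icc (0:ℝ) 1 := ⟨by linarith, by linarith⟩
  have := hdens ht
  rw [Metric.mem_closure_iff] at this
  obtain ⟨y, hy, hd⟩ := this ((b - a) / 2) (by linarith)
  rw [Real.dist_eq, abs_lt] at hd
  exact ⟨y, hy, by constructor <;> linarith [hd.1, hd.2]⟩

theorem exists_neg_box {n k : ℕ} (hk1 : 1 ≤ k) (hkn : k ≤ n)
    (δ : Fin n → Set ℝ)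
    (hsub : ∀ i, δ i ⊆ Set.Icc (0:ℝ) 1) (hinf : ∀ i, (δ i).Infinite)
    (hdens : ∀ i, Set.Icc (0:ℝ) 1 ⊆ closure (δ i))
    (x : Pt n) (hx : ∀ i, x i ∈ δ i) (i₀ : Fin n) (h0 : x i₀ ≠ 0) (h1 : x i₀ ≠ 1) :
    ∃ R : Box n, R.IsKBox k ∧ (∀ v ∈ R.vertices, ∀ i, v i ∈ δ i) ∧ R.mult k x = -1 := by
  have hx0 : 0 < x i₀ := lt_of_le_of_ne (hsub i₀ (hx i₀)).1 (Ne.symm h0)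
  have hx1 : x i₀ < 1 := lt_of_le_of_ne (hsub i₀ (hx i₀)).2 h1
  obtain ⟨K, hKsub, hKcard⟩ := Finset.exists_superset_card_eq
    (s := ({i₀} : Finset (Fin n))) (by simpa using hk1) (by simpa using hkn)
  have hi₀K : i₀ ∈ K := hKsub (Finset.mem_singleton_self i₀)
  have hy : ∀ j : Fin n, ∃ y ∈ δ j, y ≠ x j := by
    intro j
    obtain ⟨y, hy⟩ := ((hinf j).diff (Set.finite_singleton (x j))).nonempty
    exact ⟨y, hy.1, by simpa using hy.2⟩
  choose y hyδ hyne using hy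
  obtain ⟨yu, hyuδ, hyu1, hyu2⟩ := dense_exists_between (hdens i₀) (le_of_lt hx0) hx1 le_rfl
  obtain ⟨yd, hydδ, hyd1, hyd2⟩ := dense_exists_between (hdens i₀) le_rfl hx0 (le_of_lt hx1)
  classical
  set a₀ := ((K.erase i₀).filter (fun j => x j < y j)).card with ha₀
  -- second endpoint in each coordinate
  have hzex : ∀ i : Fin n, ∃ zi : ℝ, zi ∈ δ i ∧ (i ∈ K ↔ zi ≠ x i) ∧
      (i = i₀ → (zi = if Even a₀ then yu else yd)) ∧ (i ≠ i₀ → i ∈ K → zi = y i) := by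
    intro i
    by_cases hii : i = i₀
    · subst hii
      refine ⟨if Even a₀ then yu else yd, ?_, ?_, fun _ => rfl, fun h _ => absurd rfl h⟩
      · split <;> assumption
      · constructor
        · intro _
          split
          · exact ne_of_gt hyu1
          · exact ne_of_lt hyd2
        · intro _; exact hi₀K
    · by_cases hiK : i ∈ K
      · exact ⟨y i, hyδ i, ⟨fun _ => hyne i, fun _ => hiK⟩, fun h => absurd h hii, fun _ _ => rfl⟩
      · exact ⟨x i, hx i, ⟨fun h => absurd h hiK, fun h => absurd rfl h⟩, fun h => absurd h hii,
          fun _ h => absurd h hiK⟩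
  choose z hzδ hzx hzi₀ hzy using hzex
  refine ⟨⟨fun i => min (x i) (z i), fun i => max (x i) (z i)⟩, ?_, ?_, ?_⟩
  · refine ⟨fun i => ?_, fun i => ?_, fun i => min_le_max, ?_⟩
    · show min (x i) (z i) ∈ Set.Icc (0:ℝ) 1
      rcases min_cases (x i) (z i) with ⟨h, -⟩ | ⟨h, -⟩ <;> rw [h]
      · exact hsub i (hx i)
      · exact hsub i (hzδ i)
    · show max (x i) (z i) ∈ Set.Icc (0:ℝ) 1
      rcases max_cases (x i) (z i) with ⟨h, -⟩ | ⟨h, -⟩ <;> rw [h]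
      · exact hsub i (hx i)
      · exact hsub i (hzδ i)
    · rw [← hKcard]
      congr 1
      ext i
      simp only [Finset.mem_filter, Finset.mem_univ, true_and]
      show min (x i) (z i) < max (x i) (z i) ↔ i ∈ K
      rw [min_lt_max]
      constructor
      · intro h; exact (hzx i).2 (Ne.symm h)
      · intro h; exact Ne.symm ((hzx i).1 h)
  · intro v hv i
    rw [mem_vertices_iff] at hv
    rcases hv i with h | h <;> rw [h]
    · show min (x i) (z i) ∈ δ i
      rcases min_cases (x i) (z i) with ⟨h', -⟩ | ⟨h', -⟩ <;> rw [h']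
      · exact hx i
      · exact hzδ i
    · show max (x i) (z i) ∈ δ i
      rcases max_cases (x i) (z i) with ⟨h', -⟩ | ⟨h', -⟩ <;> rw [h']
      · exact hx i
      · exact hzδ i
  · have hvx : Box.IsVertex ⟨fun i => min (x i) (z i), fun i => max (x i) (z i)⟩ x := by
      intro i
      rcases le_total (x i) (z i) with h | h
      · left; exact (min_eq_left h).symm
      · right; show x i = max (x i) (z i); exact (max_eq_left h).symm
    rw [Box.mult, if_pos hvx, Box.sign]
    have hlo : ∀ i : Fin n, (x i = min (x i) (z i)) ↔ (i ∉ K ∨ x i < z i) := by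
      intro i
      constructor
      · intro h
        by_cases hiK : i ∈ K
        · right
          have hne := (hzx i).1 hiK
          rcases lt_or_gt_of_ne (Ne.symm hne) with h' | h'
        
          · exact h'
          · exfalso
            rw [min_eq_right (le_of_lt h')] at h
            exact hne h.symm
        · left; exact hiK
      · rintro (hiK | hlt)
        · have : z i = x i := by
            by_contra hc
            exact hiK ((hzx i).2 hc)
          rw [this, min_self]
        · exact (min_eq_left (le_of_lt hlt)).symm
    -- count of lo-coordinates
    have hset : Finset.univ.filter (fun i => x i = min (x i) (z i))
        = (Finset.univ \ K) ∪ K.filter (fun i => x i < z i) := by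
      ext i
      simp only [Finset.mem_filter, Finset.mem_univ, true_and, Finset.mem_union,
        Finset.mem_sdiff, hlo i]
      tauto
    have hdisj : Disjoint (Finset.univ \ K) (K.filter (fun i => x i < z i)) := by
      rw [Finset.disjoint_left]
      intro a ha hb
      exact (Finset.mem_sdiff.1 ha).2 (Finset.mem_filter.1 hb).1
    have hcard1 : (Finset.univ \ K).card = n - k := by
      rw [Finset.card_sdiff_of_subset (Finset.subset_univ K), hKcard, Finset.card_univ, Fintype.card_fin]
    have hKfsplit : K.filter (fun i => x i < z i)
        = if Even a₀ then insert i₀ ((K.erase i₀).filter (fun i => x i < z i))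
          else (K.erase i₀).filter (fun i => x i < z i) := by
      split
      case isTrue he =>
        ext i
        simp only [Finset.mem_filter, Finset.mem_insert, Finset.mem_erase]
        constructor
        · rintro ⟨hiK, hlt⟩
          by_cases hii : i = i₀
          · exact Or.inl hii
          · exact Or.inr ⟨⟨hii, hiK⟩, hlt⟩
        · rintro (rfl | ⟨⟨hii, hiK⟩, hlt⟩)
          · refine ⟨hi₀K, ?_⟩
            rw [hzi₀ i rfl, if_pos he]
            exact hyu1
          · exact ⟨hiK, hlt⟩
      case isFalse he =>
        ext i
        simp only [Finset.mem_filter, Finset.mem_erase]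
        constructor
        · rintro ⟨hiK, hlt⟩
          refine ⟨⟨?_, hiK⟩, hlt⟩
          rintro rfl
          rw [hzi₀ i rfl, if_neg he] at hlt
          exact absurd hlt (not_lt.2 (le_of_lt hyd2))
        · rintro ⟨⟨hii, hiK⟩, hlt⟩
          exact ⟨hiK, hlt⟩
    have herase : (K.erase i₀).filter (fun i => x i < z i)
        = (K.erase i₀).filter (fun j => x j < y j) := by
      apply Finset.filter_congr
      intro i hi
      have hii : i ≠ i₀ := (Finset.mem_erase.1 hi).1
      have hiK : i ∈ K := (Finset.mem_erase.1 hi).2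
      rw [hzy i hii hiK]
    have hcard2 : (K.filter (fun i => x i < z i)).card
        = if Even a₀ then a₀ + 1 else a₀ := by
      rw [hKfsplit]
      split
      case isTrue he =>
        rw [Finset.card_insert_of_notMem
          (fun hc => (Finset.mem_erase.1 (Finset.mem_filter.1 hc).1).1 rfl), herase]
      case isFalse he =>
        rw [herase]
    have htotal : (Finset.univ.filter (fun i => x i = min (x i) (z i))).card
        = (n - k) + (if Even a₀ then a₀ + 1 else a₀) := by
      rw [hset, Finset.card_union_of_disjoint hdisj, hcard1, hcard2]
    have hodd : Odd ((Finset.univ.filter (fun i => x i = min (x i) (z i))).card + (n - k)) := by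
      rw [htotal]
      rcases Nat.even_or_odd a₀ with he | ho
      · rw [if_pos he]
        rcases he with ⟨c, hc⟩
        exact ⟨(n - k) + c, by omega⟩
      · rw [if_neg (Nat.not_even_iff_odd.2 ho)]
        rcases ho with ⟨c, hc⟩
        exact ⟨(n - k) + c, by omega⟩
    rw [htotal] at hodd
    rw [htotal]
    exact Odd.neg_one_pow hodd

theorem min_eq_sub_max (t : ℝ) : min t 0 = t - max t 0 := by
  rcases le_total t 0 with h | h
  · rw [min_eq_left h, max_eq_right h, sub_zero]
  · rw [min_eq_right h, max_eq_left h, sub_self]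

/-- Exact combination identity for `Lk` applied to `a • DU + b • W`. -/
theorem Lk_combination {n k : ℕ} (B C : Pt n → ℝ)
    (DU W : Multiset (Box n)) (a b : ℕ) :
    (a : ℝ) * Lk k C B DU + (b : ℝ) * Lk k C B W
      = Lk k C B (a • DU + b • W)
        + ∑ u ∈ TSupp DU ∪ TSupp W,
          ((a : ℝ) * max ((multDU k DU u : ℤ) : ℝ) 0
            + (b : ℝ) * max ((multDU k W u : ℤ) : ℝ) 0
            - max ((multDU k (a • DU + b • W) u : ℤ) : ℝ) 0) * (B u - C u) := by
  set S := TSupp DU ∪ TSupp W with hS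
  have h1 : TSupp DU ⊆ S := Finset.subset_union_left
  have h2 : TSupp W ⊆ S := Finset.subset_union_right
  have h3 : TSupp (a • DU + b • W) ⊆ S := by
    intro u hu
    rcases Finset.mem_union.1 (TSupp_add_subset _ _ hu) with h | h
    · exact h1 (TSupp_nsmul_subset _ _ h)
    · exact h2 (TSupp_nsmul_subset _ _ h)
  rw [Lk_eq_sum C B DU S h1, Lk_eq_sum C B W S h2, Lk_eq_sum C B (a • DU + b • W) S h3,
    Finset.mul_sum, Finset.mul_sum, ← Finset.sum_add_distrib, ← Finset.sum_add_distrib]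
  apply Finset.sum_congr rfl
  intro u _
  have hmE : multDU k (a • DU + b • W) u = (a : ℤ) * multDU k DU u + (b : ℤ) * multDU k W u := by
    rw [multDU_add, multDU_nsmul, multDU_nsmul]
  rw [hmE]
  push_cast
  rw [min_eq_sub_max, min_eq_sub_max, min_eq_sub_max]
  ring

theorem pos_comb_le {a b : ℝ} {p q : ℝ} (ha : 0 ≤ a) (hb : 0 ≤ b) :
    max (a * p + b * q) 0 ≤ a * max p 0 + b * max q 0 := by
  apply max_le
  · have h1 : a * p ≤ a * max p 0 := mul_le_mul_of_nonneg_left (le_max_left _ _) ha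
    have h2 : b * q ≤ b * max q 0 := mul_le_mul_of_nonneg_left (le_max_left _ _) hb
    linarith
  · have h1 : 0 ≤ a * max p 0 := mul_nonneg ha (le_max_right _ _)
    have h2 : 0 ≤ b * max q 0 := mul_nonneg hb (le_max_right _ _)
    linarith

theorem main_induction {n k : ℕ} {D : Set (Pt n)} {B C : Pt n → ℝ}
    (hCB : ∀ u ∈ D, C u ≤ B u)
    (hLCB : ∀ DU : Multiset (Box n), memRk k D DU → 0 ≤ Lk k C B DU)
    (hkey : ∀ x ∈ D, C x < B x → ∀ ε : ℝ, 0 < ε → ∃ W : Multiset (Box n),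
      memRk k D W ∧ multDU k W x < 0 ∧ Lk k C B W < ε * |((multDU k W x : ℤ) : ℝ)|) :
    ∀ DU : Multiset (Box n), memRk k D DU → 0 ≤ Lk k C C DU := by
  have claim : ∀ q : ℕ, ∀ DU : Multiset (Box n), memRk k D DU →
      ∀ T : Finset (Pt n), T.card ≤ q →
      (∀ u ∈ T, 0 < multDU k DU u ∧ C u < B u) →
      ∀ ε : ℝ, 0 < ε →
      ∑ u ∈ T, ((multDU k DU u : ℤ) : ℝ) * (B u - C u) ≤ Lk k C B DU + ε := by
    intro q
    induction q with
    | zero =>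
      intro DU hDU T hT hTprop ε hε
      rw [Finset.card_eq_zero.1 (Nat.le_zero.1 hT)]
      simp only [Finset.sum_empty]
      linarith [hLCB DU hDU]
    | succ q ih =>
      intro DU hDU T hT hTprop ε hε
      rcases Finset.eq_empty_or_nonempty T with rfl | ⟨x, hxT⟩
      · simp only [Finset.sum_empty]
        linarith [hLCB DU hDU]
      have hm₁ : 0 < multDU k DU x := (hTprop x hxT).1
      have hxB : C x < B x := (hTprop x hxT).2
      have hxD : x ∈ D := TSupp_mem_D hDU (multDU_ne_zero_mem (k := k) (DU := DU) (u := x) (by omega))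
      have hm₁R : (0:ℝ) < ((multDU k DU x : ℤ) : ℝ) := by exact_mod_cast hm₁
      obtain ⟨W, hW, hm', hLW⟩ := hkey x hxD hxB (ε / (2 * ((multDU k DU x : ℤ) : ℝ)))
        (by positivity)
      set a := (multDU k W x).natAbs with hadef
      set b := (multDU k DU x).natAbs with hbdef
      have haZ : ((a : ℕ) : ℤ) = -(multDU k W x) :=
        Int.ofNat_natAbs_of_nonpos hm'.le
      have hbZ : ((b : ℕ) : ℤ) = multDU k DU x := Int.natAbs_of_nonneg hm₁.le
      have haR : ((a : ℕ) : ℝ) = -((multDU k W x : ℤ) : ℝ) := by exact_mod_cast haZ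
      have hbR : ((b : ℕ) : ℝ) = ((multDU k DU x : ℤ) : ℝ) := by exact_mod_cast hbZ
      have ha1 : 1 ≤ a := by
        rw [hadef]; omega
      have haRpos : (0:ℝ) < (a : ℕ) := by exact_mod_cast (by omega : 0 < a)
      set E := a • DU + b • W with hEdef
      have hE : memRk k D E := memRk_add (memRk_nsmul a hDU) (memRk_nsmul b hW)
      have hmE : ∀ u, multDU k E u
          = (a : ℤ) * multDU k DU u + (b : ℤ) * multDU k W u := by
        intro u
        rw [hEdef, multDU_add, multDU_nsmul, multDU_nsmul]
      have hEx : multDU k E x = 0 := by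
        rw [hmE x, haZ, hbZ]; ring
      set T' := T.erase x with hT'def
      set T'' := T'.filter (fun u => 0 < multDU k E u) with hT''def
      have hT''card : T''.card ≤ q := by
        calc T''.card ≤ T'.card := Finset.card_filter_le _ _
        _ = T.card - 1 := by rw [hT'def, Finset.card_erase_of_mem hxT]
        _ ≤ q := by omega
      have hT''prop : ∀ u ∈ T'', 0 < multDU k E u ∧ C u < B u := by
        intro u hu
        rw [hT''def, Finset.mem_filter] at hu
        exact ⟨hu.2, (hTprop u (Finset.mem_of_mem_erase hu.1)).2⟩
      have IH := ih E hE T'' hT''card hT''prop (ε / 2) (by positivity)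
      -- notation
      set S := TSupp DU ∪ TSupp W with hSdef
      have hSD : ∀ u ∈ S, u ∈ D := by
        intro u hu
        rcases Finset.mem_union.1 hu with h | h
        · exact TSupp_mem_D hDU h
        · exact TSupp_mem_D hW h
      have hTsubS : T ⊆ S := by
        intro u hu
        exact Finset.mem_union_left _ (multDU_ne_zero_mem (k := k) (DU := DU) (u := u) (by have := (hTprop u hu).1; omega))
      set Dif : Pt n → ℝ := fun u =>
          ((a : ℝ) * max ((multDU k DU u : ℤ) : ℝ) 0
            + (b : ℝ) * max ((multDU k W u : ℤ) : ℝ) 0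
            - max ((multDU k E u : ℤ) : ℝ) 0) * (B u - C u) with hDif
      have hDifnn : ∀ u ∈ S, 0 ≤ Dif u := by
        intro u hu
        simp only [hDif]
        apply mul_nonneg _ (by linarith [hCB u (hSD u hu)])
        have := pos_comb_le (p := ((multDU k DU u : ℤ) : ℝ)) (q := ((multDU k W u : ℤ) : ℝ))
          (a := ((a:ℕ) : ℝ)) (b := ((b:ℕ) : ℝ)) (by positivity) (by positivity)
        have hcast : ((multDU k E u : ℤ) : ℝ)
            = ((a:ℕ):ℝ) * ((multDU k DU u : ℤ) : ℝ) + ((b:ℕ):ℝ) * ((multDU k W u : ℤ) : ℝ) := by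
          rw [hmE u]; push_cast; ring
        rw [hcast]
        linarith
      -- Step A : the tracked sum is controlled by the IH sum plus the corrections
      have hDifx : Dif x = ((a:ℕ):ℝ) * ((multDU k DU x : ℤ) : ℝ) * (B x - C x) := by
        simp only [hDif]
        rw [hEx]
        rw [max_eq_left hm₁R.le, max_eq_right (by exact_mod_cast hm'.le : ((multDU k W x : ℤ):ℝ) ≤ 0)]
        norm_num
      have hstepA : ∑ u ∈ T, ((a:ℕ):ℝ) * ((multDU k DU u : ℤ) : ℝ) * (B u - C u)
          ≤ (∑ u ∈ T'', ((multDU k E u : ℤ) : ℝ) * (B u - C u)) + ∑ u ∈ T, Dif u := by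
        rw [← Finset.add_sum_erase T _ hxT, ← Finset.add_sum_erase T Dif hxT]
        rw [hDifx]
        have hsum' : ∑ u ∈ T'', ((multDU k E u : ℤ) : ℝ) * (B u - C u)
            = ∑ u ∈ T', max ((multDU k E u : ℤ) : ℝ) 0 * (B u - C u) := by
          rw [hT''def, Finset.sum_filter]
          apply Finset.sum_congr rfl
          intro u hu
          split
          case isTrue h => rw [max_eq_left (by exact_mod_cast h.le)]
          case isFalse h =>
            rw [max_eq_right (by exact_mod_cast (not_lt.1 h) : ((multDU k E u : ℤ):ℝ) ≤ 0)]
            rw [zero_mul]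
        rw [hsum']
        have hptw : ∀ u ∈ T', ((a:ℕ):ℝ) * ((multDU k DU u : ℤ) : ℝ) * (B u - C u)
            ≤ max ((multDU k E u : ℤ) : ℝ) 0 * (B u - C u) + Dif u := by
          intro u hu
          have huT : u ∈ T := Finset.mem_of_mem_erase hu
          have hmu : 0 < multDU k DU u := (hTprop u huT).1
          have hβ : 0 ≤ B u - C u := by
            linarith [(hTprop u huT).2]
          simp only [hDif]
          have hmax1 : max ((multDU k DU u : ℤ) : ℝ) 0 = ((multDU k DU u : ℤ) : ℝ) :=
            max_eq_left (by exact_mod_cast hmu.le)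
          rw [hmax1]
          have hq : 0 ≤ ((b:ℕ):ℝ) * max ((multDU k W u : ℤ) : ℝ) 0 := by positivity
          nlinarith [mul_nonneg hq hβ]
        have h4 := Finset.sum_le_sum hptw
        rw [Finset.sum_add_distrib] at h4
        rw [← hT'def]
        linarith [h4]
      -- Step B : corrections over T are at most corrections over S
      have hstepB : ∑ u ∈ T, Dif u ≤ ∑ u ∈ S, Dif u :=
        Finset.sum_le_sum_of_subset_of_nonneg hTsubS (fun u hu _ => hDifnn u hu)
      -- combine with the exact identity
      have hcomb := Lk_combination (k := k) B C DU W a b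
      have hWbound : ((b:ℕ):ℝ) * Lk k C B W ≤ ((a:ℕ):ℝ) * (ε / 2) := by
        rw [hbR]
        have habs : |((multDU k W x : ℤ) : ℝ)| = ((a:ℕ):ℝ) := by
          rw [abs_of_neg (by exact_mod_cast hm' : ((multDU k W x : ℤ):ℝ) < 0), haR]
        have h1 : Lk k C B W < (ε / (2 * ((multDU k DU x : ℤ) : ℝ))) * ((a:ℕ):ℝ) := by
          rw [← habs]; exact hLW
        have h2 : ((multDU k DU x : ℤ) : ℝ) * Lk k C B W
            ≤ ((multDU k DU x : ℤ) : ℝ) * ((ε / (2 * ((multDU k DU x : ℤ) : ℝ))) * ((a:ℕ):ℝ)) := by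
          apply mul_le_mul_of_nonneg_left h1.le (by positivity)
        have h3 : ((multDU k DU x : ℤ) : ℝ) * ((ε / (2 * ((multDU k DU x : ℤ) : ℝ))) * ((a:ℕ):ℝ))
            = ((a:ℕ):ℝ) * (ε / 2) := by
          field_simp
        rw [h3] at h2
        exact h2
      -- final chain
      have hchain : ((a:ℕ):ℝ) * (∑ u ∈ T, ((multDU k DU u : ℤ) : ℝ) * (B u - C u))
          ≤ ((a:ℕ):ℝ) * (Lk k C B DU + ε) := by
        rw [Finset.mul_sum]
        have e1 : ∑ u ∈ T, ((a:ℕ):ℝ) * (((multDU k DU u : ℤ) : ℝ) * (B u - C u))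
            = ∑ u ∈ T, ((a:ℕ):ℝ) * ((multDU k DU u : ℤ) : ℝ) * (B u - C u) := by
          apply Finset.sum_congr rfl; intro u _; ring
        rw [e1]
        have e2 : Lk k C B E + ∑ u ∈ S, Dif u
            = ((a:ℕ):ℝ) * Lk k C B DU + ((b:ℕ):ℝ) * Lk k C B W := by
          rw [hcomb]
        have haε : ((a:ℕ):ℝ) * (ε/2) + ε/2 ≤ ((a:ℕ):ℝ) * ε := by
          have : (1:ℝ) ≤ ((a:ℕ):ℝ) := by exact_mod_cast ha1
          nlinarith
        calc ∑ u ∈ T, ((a:ℕ):ℝ) * ((multDU k DU u : ℤ) : ℝ) * (B u - C u)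
            ≤ (∑ u ∈ T'', ((multDU k E u : ℤ) : ℝ) * (B u - C u)) + ∑ u ∈ T, Dif u := hstepA
          _ ≤ (Lk k C B E + ε/2) + ∑ u ∈ S, Dif u := by linarith [hstepB, IH]
          _ = ((a:ℕ):ℝ) * Lk k C B DU + ((b:ℕ):ℝ) * Lk k C B W + ε/2 := by
              rw [← e2]; ring
          _ ≤ ((a:ℕ):ℝ) * Lk k C B DU + ((a:ℕ):ℝ) * (ε/2) + ε/2 := by linarith [hWbound]
          _ ≤ ((a:ℕ):ℝ) * (Lk k C B DU + ε) := by nlinarith [haε]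
      exact le_of_mul_le_mul_left hchain haRpos
  -- conclusion
  intro DU hDU
  have hfinal : ∀ ε : ℝ, 0 < ε → 0 ≤ Lk k C C DU + ε := by
    intro ε hε
    set T := (TSupp DU).filter (fun u => 0 < multDU k DU u ∧ C u < B u) with hTdef
    have hTprop : ∀ u ∈ T, 0 < multDU k DU u ∧ C u < B u := by
      intro u hu
      exact (Finset.mem_filter.1 hu).2
    have hmain := claim T.card DU hDU T le_rfl hTprop ε hε
    -- identity relating Lk C C and Lk C B
    have hTsub : T ⊆ TSupp DU := Finset.filter_subset _ _
    have hzero : ∀ u ∈ TSupp DU, u ∉ T →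
        max ((multDU k DU u : ℤ) : ℝ) 0 * (B u - C u) = 0 := by
      intro u huS huT
      rw [hTdef, Finset.mem_filter] at huT
      push_neg at huT
      rcases le_or_gt (multDU k DU u) 0 with h | h
      · rw [max_eq_right (by exact_mod_cast h : ((multDU k DU u : ℤ):ℝ) ≤ 0), zero_mul]
      · have hBC : B u ≤ C u := huT huS h
        have hCBu : C u ≤ B u := hCB u (TSupp_mem_D hDU huS)
        have : B u - C u = 0 := by linarith
        rw [this, mul_zero]
    have h1 : ∑ u ∈ T, ((multDU k DU u : ℤ) : ℝ) * (B u - C u)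
        = ∑ u ∈ TSupp DU, max ((multDU k DU u : ℤ) : ℝ) 0 * (B u - C u) := by
      have hcongr : ∀ u ∈ T, ((multDU k DU u : ℤ) : ℝ) * (B u - C u)
          = max ((multDU k DU u : ℤ) : ℝ) 0 * (B u - C u) := by
        intro u hu
        rw [max_eq_left (by exact_mod_cast (hTprop u hu).1.le : (0:ℝ) ≤ ((multDU k DU u : ℤ):ℝ))]
      rw [Finset.sum_congr rfl hcongr]
      exact Finset.sum_subset hTsub hzero
    have hid : Lk k C C DU = Lk k C B DU
        - ∑ u ∈ T, ((multDU k DU u : ℤ) : ℝ) * (B u - C u) := by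
      rw [Lk_eq_sum C C DU (TSupp DU) (le_refl _), Lk_eq_sum C B DU (TSupp DU) (le_refl _), h1,
        ← Finset.sum_sub_distrib]
      apply Finset.sum_congr rfl
      intro u _
      push_cast
      rw [min_eq_sub_max]
      ring
    rw [hid]
    linarith [hmain]
  by_contra hneg
  push_neg at hneg
  have := hfinal (-(Lk k C C DU) / 2) (by linarith)
  linarith
end KIncr

open KIncr
/-- Proposition 4.5: the pointwise limit `C` of the sequence
obtained by raising `A` is `k`-increasing on the mesh. -/
theorem stmt9 (n k : ℕ) (hn : 1 ≤ n) (hk1 : 1 ≤ k) (hkn : k ≤ n)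
    (D : Set (Pt n)) (hD : IsMesh D)
    (d : ℕ → Pt n) (hdinj : Function.Injective d) (hdrange : Set.range d = D)
    (A B : Pt n → ℝ)
    (hAI : ∀ u ∈ D, A u ∈ Set.Icc (0:ℝ) 1) (hBI : ∀ u ∈ D, B u ∈ Set.Icc (0:ℝ) 1)
    (hAB : ∀ u ∈ D, A u ≤ B u)
    (hL : ∀ DU : Multiset (Box n), memRk k D DU → 0 ≤ Lk k A B DU)
    (hvert : ∀ w : Pt n, isCubeVertex w → A w = B w)
    (As : ℕ → Pt n → ℝ) (hAs0 : As 0 = A)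
    (hAsSucc : ∀ i : ℕ, ∀ u : Pt n,
      As (i + 1) u = if u = d i then As i u + gammaK k D (As i) B (d i) else As i u)
    (C : Pt n → ℝ)
    (hC : ∀ u ∈ D, Filter.Tendsto (fun i => As i u) Filter.atTop (nhds (C u))) :
    ∀ DU : Multiset (Box n), memRk k D DU → 0 ≤ Lk k C C DU := by  classical
  obtain ⟨δ, hδprops, hDeq⟩ := hD
  -- Part I : invariants along the raising sequence
  have hinv : ∀ i : ℕ, (∀ u ∈ D, As i u ≤ B u) ∧
      (∀ DU : Multiset (Box n), memRk k D DU → 0 ≤ Lk k (As i) B DU) := by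
    intro i
    induction i with
    | zero => rw [hAs0]; exact ⟨hAB, hL⟩
    | succ i ih =>
      have hdD : d i ∈ D := hdrange ▸ Set.mem_range_self i
      have hγle : gammaK k D (As i) B (d i) ≤ B (d i) - As i (d i) := min_le_right _ _
      constructor
      · intro u hu
        rw [hAsSucc i u]
        split
        case isTrue h =>
          rw [h]
          linarith [hγle]
        case isFalse h => exact ih.1 u hu
      · exact Lk_step_nonneg ih.2 (hAsSucc i)
  -- monotonicity of the sequence at every point
  have hγnn : ∀ i, 0 ≤ gammaK k D (As i) B (d i) := by
    intro i
    have hdD : d i ∈ D := hdrange ▸ Set.mem_range_self i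
    exact le_min (Pneg_nonneg (hinv i).2 _) (by linarith [(hinv i).1 (d i) hdD])
  have hmono : ∀ u, Monotone fun i => As i u := by
    intro u
    apply monotone_nat_of_le_succ
    intro i
    rw [hAsSucc i u]
    split
    case isTrue h => linarith [hγnn i]
    case isFalse h => exact le_rfl
  -- bounds on the limit
  have hAsC : ∀ u ∈ D, ∀ i, As i u ≤ C u := by
    intro u hu i
    exact (hmono u).ge_of_tendsto (hC u hu) i
  have hCB : ∀ u ∈ D, C u ≤ B u := by
    intro u hu
    exact le_of_tendsto' (hC u hu) (fun i => (hinv i).1 u hu)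
  have hLCB : ∀ DU : Multiset (Box n), memRk k D DU → 0 ≤ Lk k C B DU :=
    Lk_limit_nonneg hC (fun i => (hinv i).2)
  -- the sequence at `d i` is eventually constant
  have hCx : ∀ i, C (d i) = As (i + 1) (d i) := by
    intro i
    have hdD : d i ∈ D := hdrange ▸ Set.mem_range_self i
    have hconst : ∀ j, i + 1 ≤ j → As j (d i) = As (i + 1) (d i) := by
      intro j hj
      induction j with
      | zero => omega
      | succ j ihj =>
        rcases Nat.lt_or_ge (i + 1) (j + 1) with h | h
        · have hij : i + 1 ≤ j := by omega
          rw [hAsSucc j (d i), if_neg, ihj hij]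
          intro hc
          exact absurd (hdinj hc) (by omega)
        · have : i + 1 = j + 1 := by omega
          rw [this]
      
    have ht2 : Filter.Tendsto (fun j => As j (d i)) Filter.atTop (nhds (As (i + 1) (d i))) := by
      apply Filter.Tendsto.congr' _ tendsto_const_nhds
      filter_upwards [Filter.eventually_ge_atTop (i + 1)] with j hj
      exact (hconst j hj).symm
    exact tendsto_nhds_unique (hC (d i) hdD) ht2
  -- the key approximation property of the limit
  have hkey : ∀ x ∈ D, C x < B x → ∀ ε : ℝ, 0 < ε → ∃ W : Multiset (Box n),
      memRk k D W ∧ multDU k W x < 0 ∧ Lk k C B W < ε * |((multDU k W x : ℤ) : ℝ)| := by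
    intro x hxD hxCB ε hε
    obtain ⟨i, rfl⟩ := hdrange ▸ hxD
    set x := d i with hxdef
    have hCeq : C x = As i x + gammaK k D (As i) B x := by
      rw [hCx i, hAsSucc i x, if_pos rfl]
    -- the defect γ is given by Pneg
    have hγlt : gammaK k D (As i) B x < B x - As i x := by
      have := hCeq
      linarith [hxCB]
    have hγeq : gammaK k D (As i) B x = Pneg k D (As i) B x := by
      rcases le_total (Pneg k D (As i) B x) (B x - As i x) with h | h
      · rw [gammaK, min_eq_left h]
      · exfalso
        rw [gammaK, min_eq_right h] at hγlt
        exact absurd hγlt (lt_irrefl _)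
    -- the admissible set for x is nonempty
    have hnonempty : {r : ℝ | ∃ DU : Multiset (Box n), memRk k D DU ∧ multDU k DU x < 0 ∧
        r = Lk k (As i) B DU / |((multDU k DU x : ℤ) : ℝ)|}.Nonempty := by
      have hncv : ¬ isCubeVertex x := by
        intro hcv
        have h1 : A x = B x := hvert x hcv
        have h2 : A x ≤ C x := by
          have := hAsC x hxD 0
          rw [hAs0] at this
          exact this
        linarith [hxCB]
      rw [isCubeVertex] at hncv
      push_neg at hncv
      obtain ⟨i₀, h0, h1⟩ := hncv
      have hxδ : ∀ j, x j ∈ δ j := by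
        have := hxD
        rw [hDeq] at this
        exact this
      obtain ⟨R, hR, hRv, hRm⟩ := exists_neg_box hk1 hkn δ (fun j => (hδprops j).1)
        (fun j => (hδprops j).2.2.1) (fun j => (hδprops j).2.2.2.1) x hxδ i₀ h0 h1
      have hmemW : memRk k D ({R} : Multiset (Box n)) := by
        intro R' hR'
        rw [Multiset.mem_singleton] at hR'
        subst hR'
        refine ⟨hR, fun v hv => ?_⟩
        rw [hDeq]
        exact hRv v hv
      have hmW : multDU k ({R} : Multiset (Box n)) x = -1 := by
        rw [multDU, Multiset.map_singleton, Multiset.sum_singleton, hRm]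
      exact ⟨Lk k (As i) B ({R} : Multiset (Box n)) / |((multDU k ({R} : Multiset (Box n)) x : ℤ) : ℝ)|,
        ({R} : Multiset (Box n)), hmemW, by rw [hmW]; norm_num, rfl⟩
    -- pick an almost optimal multiset
    obtain ⟨r, hrmem, hrlt⟩ := Real.lt_sInf_add_pos hnonempty hε
    obtain ⟨DU, hDU, hm, hreq⟩ := hrmem
    have habs : (0:ℝ) < |((multDU k DU x : ℤ) : ℝ)| := by
      rw [abs_pos]
      exact_mod_cast hm.ne
    refine ⟨DU, hDU, hm, ?_⟩
    -- compare Lk for C and for As i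
    set γ := gammaK k D (As i) B x with hγdef
    set S₀ := insert x (TSupp DU) with hS₀def
    have hsub : TSupp DU ⊆ S₀ := Finset.subset_insert _ _
    have hxS₀ : x ∈ S₀ := Finset.mem_insert_self _ _
    have hcomp : Lk k C B DU ≤ Lk k (As i) B DU + ((multDU k DU x : ℤ) : ℝ) * γ := by
      rw [Lk_eq_sum C B DU S₀ hsub, Lk_eq_sum (As i) B DU S₀ hsub]
      rw [← Finset.add_sum_erase S₀ _ hxS₀, ← Finset.add_sum_erase S₀ _ hxS₀]
      have hCASx : C x = As i x + γ := hCeq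
      have hterm : ((min (multDU k DU x) 0 : ℤ) : ℝ) * C x + ((max (multDU k DU x) 0 : ℤ) : ℝ) * B x
          = (((min (multDU k DU x) 0 : ℤ) : ℝ) * As i x + ((max (multDU k DU x) 0 : ℤ) : ℝ) * B x)
            + ((multDU k DU x : ℤ) : ℝ) * γ := by
        rw [min_eq_left hm.le, hCASx]
        ring
      rw [hterm]
      have hrest : ∀ u ∈ S₀.erase x,
          ((min (multDU k DU u) 0 : ℤ) : ℝ) * C u + ((max (multDU k DU u) 0 : ℤ) : ℝ) * B u
          ≤ ((min (multDU k DU u) 0 : ℤ) : ℝ) * As i u + ((max (multDU k DU u) 0 : ℤ) : ℝ) * B u := by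
        intro u hu
        have huT : u ∈ TSupp DU := by
          have h1 := Finset.mem_of_mem_erase hu
          rcases Finset.mem_insert.1 h1 with h | h
          · exact absurd h (Finset.ne_of_mem_erase hu)
          · exact h
        have huD : u ∈ D := TSupp_mem_D hDU huT
        have hAC : As i u ≤ C u := hAsC u huD i
        have hmin : ((min (multDU k DU u) 0 : ℤ) : ℝ) ≤ 0 := by
          exact_mod_cast min_le_right (multDU k DU u) 0
        nlinarith
      linarith [Finset.sum_le_sum hrest]
    -- finish
    have hLAs : Lk k (As i) B DU = r * |((multDU k DU x : ℤ) : ℝ)| := by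
      rw [hreq]
      field_simp
    have hmneg : ((multDU k DU x : ℤ) : ℝ) = -|((multDU k DU x : ℤ) : ℝ)| := by
      rw [abs_of_neg (by exact_mod_cast hm : ((multDU k DU x : ℤ) : ℝ) < 0)]
      ring
    have hrgε : r < γ + ε := by
      rw [hγeq, Pneg]
      exact hrlt
    have hmγ : ((multDU k DU x : ℤ) : ℝ) * γ = -(|((multDU k DU x : ℤ) : ℝ)| * γ) := by
      rw [hmneg, abs_neg, abs_abs]; ring
    have hp : 0 < (γ + ε - r) * |((multDU k DU x : ℤ) : ℝ)| :=
      mul_pos (by linarith) habs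
    nlinarith [hcomp, hLAs, hmγ, hp]
  exact main_induction hCB hLCB hkey
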